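/- For the graph H_t (t ≥ 4) built from four special vertices S plus disjoint cliques of sizes 4, 8, 16, …, 2^{t+1}, with each vertex of S adjacent to exactly one quarter of each clique and the neighborhoods of vertices of S pairwise disjoint, the greedy domination algorithm selects exactly t vertices, one from each clique; hence γ_g(H_t) = t. -/

import Mathlib

open Finset

namespace SG

variable {V : Type*}

/-- Closed neighborhood of a vertex as a `Finset`. -/
def closedNbhd [Fintype V] [DecidableEq V] (G : SimpleGraph V) [DecidableRel G.Adj]
    (v : V) : Finset V :=
  insert v (G.neighborFinset v)

/-- A fractional domination: weights in `[0,1]` with each closed neighborhood of weight `≥ 1`. -/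
def IsFracDom [Fintype V] [DecidableEq V] (G : SimpleGraph V) [DecidableRel G.Adj]
    (f : V → ℝ) : Prop :=
  (∀ v, 0 ≤ f v ∧ f v ≤ 1) ∧ ∀ v, 1 ≤ ∑ u ∈ closedNbhd G v, f u

/-- The fractional domination number. -/
noncomputable def fracDomNumber [Fintype V] [DecidableEq V] (G : SimpleGraph V)
    [DecidableRel G.Adj] : ℝ :=
  sInf {x | ∃ f, IsFracDom G f ∧ x = ∑ v, f v}

/-- A dominating set: every vertex not in `S` is adjacent to some vertex of `S`. -/
def IsDomSet (G : SimpleGraph V) (S : Finset V) : Prop :=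
  ∀ v, v ∉ S → ∃ u ∈ S, G.Adj u v

/-- The domination number. -/
noncomputable def domNumber [Fintype V] (G : SimpleGraph V) : ℕ :=
  sInf {k | ∃ S : Finset V, S.card = k ∧ IsDomSet G S}

variable [Fintype V] [LinearOrder V]

/-- Number of new (not yet dominated) vertices that `v` would dominate, given
that the vertices of `D` are already dominated. -/
def newScore (G : SimpleGraph V) [DecidableRel G.Adj] (D : Finset V) (v : V) : ℕ :=
  (closedNbhd G v \ D).card

/-- One run of the greedy domination algorithm (with fuel), starting with the
vertices of `D` already dominated.  At each step we pick a vertex dominating as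
many new vertices as possible, ties broken by taking the earliest vertex in the
linear order on `V`. -/
def greedyAux (G : SimpleGraph V) [DecidableRel G.Adj] : ℕ → Finset V → List V
  | 0, _ => []
  | (n + 1), D =>
    if D = Finset.univ then []
    else
      let C := Finset.univ.filter fun v => ∀ u, newScore G D u ≤ newScore G D v
      if h : C.Nonempty then
        C.min' h :: greedyAux G n (D ∪ closedNbhd G (C.min' h))
      else []

/-- The greedy dominating sequence of `G`. -/
def greedyList (G : SimpleGraph V) [DecidableRel G.Adj] : List V :=
  greedyAux G (Fintype.card V) ∅

/-- The greedy domination number: the length of the greedy dominating sequence. -/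
def greedyNumber (G : SimpleGraph V) [DecidableRel G.Adj] : ℕ :=
  (greedyList G).length

/-- The index of the first vertex in the greedy dominating sequence which dominates `u`. -/
def stepOf (G : SimpleGraph V) [DecidableRel G.Adj] (u : V) : ℕ :=
  (greedyList G).findIdx fun x => u ∈ closedNbhd G x

/-- `F(u)`: the set of vertices first dominated at the same greedy step as `u`. -/
def Fset (G : SimpleGraph V) [DecidableRel G.Adj] (u : V) : Finset V :=
  Finset.univ.filter fun w => stepOf G w = stepOf G u



/-- Bundled hypotheses about `H_t`. -/
structure Setup (H : SimpleGraph V) [DecidableRel H.Adj] (t : ℕ) (S : Finset V)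
    (C : Fin t → Finset V) : Prop where
  ht : 4 ≤ t
  hS : S.card = 4
  hC : ∀ j, (C j).card = 4 * 2 ^ (j : ℕ)
  hcover : S ∪ Finset.univ.biUnion C = Finset.univ
  hdSC : ∀ j, Disjoint S (C j)
  hdCC : ∀ j k, j ≠ k → Disjoint (C j) (C k)
  hclique : ∀ j, ∀ x ∈ C j, ∀ y ∈ C j, x ≠ y → H.Adj x y
  hCCedge : ∀ j k, j ≠ k → ∀ x ∈ C j, ∀ y ∈ C k, ¬ H.Adj x y
  hSindep : ∀ x ∈ S, ∀ y ∈ S, ¬ H.Adj x y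
  hquarter : ∀ u ∈ S, ∀ j, ((C j).filter fun w => H.Adj u w).card = 2 ^ (j : ℕ)
  hdisjN : ∀ u ∈ S, ∀ v ∈ S, u ≠ v → ∀ w, ¬ (H.Adj u w ∧ H.Adj v w)

variable {H : SimpleGraph V} [DecidableRel H.Adj] {t : ℕ} {S : Finset V} {C : Fin t → Finset V}

/-- Every clique vertex has a unique neighbor in `S`. -/
lemma Setup.uniqueS (hs : Setup H t S C) (j : Fin t) {w : V} (hw : w ∈ C j) :
    ∃! u, u ∈ S ∧ H.Adj u w := by
  have hU : S.biUnion (fun u => (C j).filter fun w => H.Adj u w) = C j := by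
    apply Finset.eq_of_subset_of_card_le
    · intro x hx
      rcases Finset.mem_biUnion.1 hx with ⟨u, _, hxu⟩
      exact (Finset.mem_filter.1 hxu).1
    · rw [Finset.card_biUnion]
      · rw [hs.hC j]
        have : ∀ u ∈ S, ((C j).filter fun w => H.Adj u w).card = 2 ^ (j : ℕ) :=
          fun u hu => hs.hquarter u hu j
        rw [Finset.sum_congr rfl this, Finset.sum_const, hs.hS]
        ring_nf
        omega
      · intro u hu v hv huv
        rw [Function.onFun, Finset.disjoint_left]
        intro a ha ha'
        exact hs.hdisjN u hu v hv huv a ⟨(Finset.mem_filter.1 ha).2, (Finset.mem_filter.1 ha').2⟩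
  have hw' : w ∈ S.biUnion (fun u => (C j).filter fun w => H.Adj u w) := hU.symm ▸ hw
  rcases Finset.mem_biUnion.1 hw' with ⟨u, hu, hwu⟩
  refine ⟨u, ⟨hu, (Finset.mem_filter.1 hwu).2⟩, ?_⟩
  rintro v ⟨hv, hadj⟩
  by_contra hne
  exact hs.hdisjN v hv u hu hne w ⟨hadj, (Finset.mem_filter.1 hwu).2⟩

/-- Closed neighborhood of a clique vertex. -/
lemma Setup.nbhdClique (hs : Setup H t S C) (j : Fin t) {w : V} (hw : w ∈ C j)
    {u : V} (hu : u ∈ S) (hadj : H.Adj u w) :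
    closedNbhd H w = insert u (C j) := by
  ext x
  simp only [closedNbhd, Finset.mem_insert, SimpleGraph.mem_neighborFinset]
  constructor
  · rintro (rfl | hx)
    · exact Or.inr hw
    · have hxu : x ∈ S ∪ Finset.univ.biUnion C := hs.hcover ▸ Finset.mem_univ x
      rcases Finset.mem_union.1 hxu with hxS | hxC
      · left
        by_contra hne
        exact hs.hdisjN x hxS u hu hne w ⟨hx.symm, hadj⟩
      · rcases Finset.mem_biUnion.1 hxC with ⟨k, _, hxk⟩
        rcases eq_or_ne k j with rfl | hkj
        · exact Or.inr hxk
        · exact absurd hx.symm (hs.hCCedge k j hkj x hxk w hw)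
  · rintro (rfl | hx)
    · exact Or.inr (hadj.symm)
    · rcases eq_or_ne x w with rfl | hne
      · exact Or.inl rfl
      · exact Or.inr (hs.hclique j w hw x hx hne.symm)

/-- Closed neighborhood of a vertex of `S`. -/
lemma Setup.nbhdS (hs : Setup H t S C) {u : V} (hu : u ∈ S) :
    closedNbhd H u
      = insert u ((Finset.univ : Finset (Fin t)).biUnion
          fun j => (C j).filter fun w => H.Adj u w) := by
  ext x
  simp only [closedNbhd, Finset.mem_insert, SimpleGraph.mem_neighborFinset,
    Finset.mem_biUnion, Finset.mem_filter]
  constructor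
  · rintro (rfl | hx)
    · exact Or.inl rfl
    · have hxu : x ∈ S ∪ Finset.univ.biUnion C := hs.hcover ▸ Finset.mem_univ x
      rcases Finset.mem_union.1 hxu with hxS | hxC
      · exact absurd hx (hs.hSindep u hu x hxS)
      · rcases Finset.mem_biUnion.1 hxC with ⟨k, _, hxk⟩
        exact Or.inr ⟨k, Finset.mem_univ k, hxk, hx⟩
  · rintro (rfl | ⟨k, _, hxk, hadj⟩)
    · exact Or.inl rfl
    · exact Or.inr hadj

lemma sum_range_two_pow (m : ℕ) : ∑ i ∈ Finset.range m, 2 ^ i = 2 ^ m - 1 := by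
  induction m with
  | zero => simp
  | succ n ih =>
    rw [Finset.sum_range_succ, ih, pow_succ]
    have : 1 ≤ 2 ^ n := Nat.one_le_two_pow
    omega

lemma sum_fin_two_pow {t m : ℕ} (F : Finset (Fin t)) (hF : ∀ j ∈ F, (j : ℕ) < m) :
    ∑ j ∈ F, 2 ^ (j : ℕ) ≤ 2 ^ m - 1 := by
  have h1 : ∑ j ∈ F, 2 ^ (j : ℕ) = ∑ i ∈ F.image Fin.val, 2 ^ i := by
    rw [Finset.sum_image]
    intro a _ b _ hab
    exact Fin.val_injective hab
  rw [h1, ← sum_range_two_pow m]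
  apply Finset.sum_le_sum_of_subset
  intro i hi
  rcases Finset.mem_image.1 hi with ⟨j, hj, rfl⟩
  exact Finset.mem_range.2 (hF j hj)

/-- Dominated set after the cliques of index `≥ m` (and `S' ⊆ S`) are dominated. -/
def bigD (t : ℕ) (C : Fin t → Finset V) (m : ℕ) (S' : Finset V) : Finset V :=
  S' ∪ (Finset.univ.filter fun j : Fin t => m ≤ (j : ℕ)).biUnion C

lemma mem_bigD {m : ℕ} {S' : Finset V} {x : V} :
    x ∈ bigD t C m S' ↔ x ∈ S' ∨ ∃ j : Fin t, m ≤ (j : ℕ) ∧ x ∈ C j := by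
  simp [bigD, Finset.mem_union, Finset.mem_biUnion, Finset.mem_filter]

lemma Setup.clique_notin_bigD (hs : Setup H t S C) {m : ℕ} {S' : Finset V} (hS' : S' ⊆ S)
    (j : Fin t) (hj : (j : ℕ) < m) {w : V} (hw : w ∈ C j) : w ∉ bigD t C m S' := by
  rw [mem_bigD]
  rintro (hwS | ⟨k, hk, hwk⟩)
  · exact Finset.disjoint_left.1 (hs.hdSC j) (hS' hwS) hw
  · have hkj : k ≠ j := fun h => by omega
    exact Finset.disjoint_left.1 (hs.hdCC k j hkj) hwk hw

lemma Setup.S_mem_bigD (hs : Setup H t S C) {m : ℕ} {S' : Finset V} (hS' : S' ⊆ S)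
    {u : V} (hu : u ∈ S) : u ∈ bigD t C m S' ↔ u ∈ S' := by
  rw [mem_bigD]
  constructor
  · rintro (h | ⟨k, _, huk⟩)
    · exact h
    · exact absurd huk (Finset.disjoint_left.1 (hs.hdSC k) hu)
  · exact Or.inl

/-- Score of a clique vertex in a not-yet-dominated clique. -/
lemma Setup.score_clique_lt (hs : Setup H t S C) {m : ℕ} {S' : Finset V} (hS' : S' ⊆ S)
    (j : Fin t) (hj : (j : ℕ) < m) {w : V} (hw : w ∈ C j)
    {u : V} (hu : u ∈ S) (hadj : H.Adj u w) :
    newScore H (bigD t C m S') w = 4 * 2 ^ (j : ℕ) + (if u ∈ S' then 0 else 1) := by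
  rw [newScore, hs.nbhdClique j hw hu hadj]
  have hCD : ∀ x ∈ C j, x ∉ bigD t C m S' := fun x hx => hs.clique_notin_bigD hS' j hj hx
  have huC : u ∉ C j := Finset.disjoint_left.1 (hs.hdSC j) hu
  by_cases huS' : u ∈ S'
  · have : insert u (C j) \ bigD t C m S' = C j := by
      ext x
      simp only [Finset.mem_sdiff, Finset.mem_insert]
      constructor
      · rintro ⟨rfl | hx, hxD⟩
        · exact absurd ((hs.S_mem_bigD hS' hu).2 huS') hxD
        · exact hx
      · exact fun hx => ⟨Or.inr hx, hCD x hx⟩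
    rw [this, hs.hC j, if_pos huS']
    omega
  · have : insert u (C j) \ bigD t C m S' = insert u (C j) := by
      ext x
      simp only [Finset.mem_sdiff, Finset.mem_insert]
      constructor
      · exact fun h => h.1
      · rintro (rfl | hx)
        · exact ⟨Or.inl rfl, fun h => huS' ((hs.S_mem_bigD hS' hu).1 h)⟩
        · exact ⟨Or.inr hx, hCD x hx⟩
    rw [this, Finset.card_insert_of_notMem huC, hs.hC j, if_neg huS']

/-- Score of a clique vertex in an already-dominated clique. -/
lemma Setup.score_clique_ge (hs : Setup H t S C) {m : ℕ} {S' : Finset V}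
    (j : Fin t) (hj : m ≤ (j : ℕ)) {w : V} (hw : w ∈ C j) :
    newScore H (bigD t C m S') w ≤ 1 := by
  obtain ⟨u, ⟨hu, hadj⟩, -⟩ := hs.uniqueS j hw
  rw [newScore, hs.nbhdClique j hw hu hadj]
  have hsub : insert u (C j) \ bigD t C m S' ⊆ {u} := by
    intro x hx
    rcases Finset.mem_sdiff.1 hx with ⟨hx1, hx2⟩
    rcases Finset.mem_insert.1 hx1 with rfl | hx1
    · exact Finset.mem_singleton_self x
    · exact absurd (mem_bigD.2 (Or.inr ⟨j, hj, hx1⟩)) hx2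
  calc (insert u (C j) \ bigD t C m S').card ≤ ({u} : Finset V).card :=
        Finset.card_le_card hsub
    _ = 1 := Finset.card_singleton u

/-- Score of a vertex of `S`. -/
lemma Setup.score_S (hs : Setup H t S C) {m : ℕ} {S' : Finset V}
    {u : V} (hu : u ∈ S) :
    newScore H (bigD t C m S') u ≤ 2 ^ m := by
  rw [newScore, hs.nbhdS hu]
  set F : Finset (Fin t) := Finset.univ.filter fun j : Fin t => (j : ℕ) < m with hF
  have hsub : insert u ((Finset.univ : Finset (Fin t)).biUnion
      fun j => (C j).filter fun w => H.Adj u w) \ bigD t C m S'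
      ⊆ insert u (F.biUnion fun j => (C j).filter fun w => H.Adj u w) := by
    intro x hx
    rcases Finset.mem_sdiff.1 hx with ⟨hx1, hx2⟩
    rcases Finset.mem_insert.1 hx1 with rfl | hx1
    · exact Finset.mem_insert_self _ _
    · rcases Finset.mem_biUnion.1 hx1 with ⟨j, _, hxj⟩
      rcases lt_or_ge (j : ℕ) m with hjm | hjm
      · exact Finset.mem_insert_of_mem (Finset.mem_biUnion.2
          ⟨j, Finset.mem_filter.2 ⟨Finset.mem_univ j, hjm⟩, hxj⟩)
      · exact absurd (mem_bigD.2 (Or.inr ⟨j, hjm, (Finset.mem_filter.1 hxj).1⟩)) hx2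
  have h1 : (insert u (F.biUnion fun j => (C j).filter fun w => H.Adj u w)).card ≤ 2 ^ m := by
    calc (insert u (F.biUnion fun j => (C j).filter fun w => H.Adj u w)).card
        ≤ (F.biUnion fun j => (C j).filter fun w => H.Adj u w).card + 1 :=
          Finset.card_insert_le _ _
      _ ≤ (∑ j ∈ F, ((C j).filter fun w => H.Adj u w).card) + 1 := by
          exact Nat.add_le_add_right (Finset.card_biUnion_le) 1
      _ = (∑ j ∈ F, 2 ^ (j : ℕ)) + 1 := by
          rw [Finset.sum_congr rfl fun j _ => hs.hquarter u hu j]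
      _ ≤ (2 ^ m - 1) + 1 := by
          have := sum_fin_two_pow F (fun j hj => (Finset.mem_filter.1 hj).2)
          omega
      _ ≤ 2 ^ m := by
          have : 1 ≤ 2 ^ m := Nat.one_le_two_pow
          omega
  exact le_trans (Finset.card_le_card hsub) h1


-- MAIN INDUCTION
lemma Setup.greedy_ind (hs : Setup H t S C) :
    ∀ m, m ≤ t → ∀ n, m ≤ n → ∀ S' : Finset V, S' ⊆ S → S'.card = min (t - m) 4 →
      (greedyAux H n (bigD t C m S')).length = m ∧
      ∀ j : Fin t, (j : ℕ) < m → ∃ x ∈ greedyAux H n (bigD t C m S'), x ∈ C j := by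
  intro m
  induction m with
  | zero =>
    intro _ n _ S' hsub hcard
    have h4 : 4 ≤ t := hs.ht
    have hSS : S' = S := Finset.eq_of_subset_of_card_le hsub (by rw [hcard, hs.hS]; omega)
    have hD : bigD t C 0 S' = Finset.univ := by
      subst hSS
      apply Finset.eq_univ_of_forall
      intro x
      have hx : x ∈ S' ∪ Finset.univ.biUnion C := hs.hcover ▸ Finset.mem_univ x
      rcases Finset.mem_union.1 hx with h | h
      · exact mem_bigD.2 (Or.inl h)
      · rcases Finset.mem_biUnion.1 h with ⟨k, _, hk⟩
        exact mem_bigD.2 (Or.inr ⟨k, Nat.zero_le _, hk⟩)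
    have hnil : greedyAux H n (bigD t C 0 S') = [] := by
      cases n with
      | zero => rfl
      | succ n => rw [greedyAux, if_pos hD]
    rw [hnil]
    exact ⟨rfl, fun j hj => absurd hj (Nat.not_lt_zero _)⟩
  | succ m ih =>
    intro hm n hn S' hsub hcard
    obtain ⟨n, rfl⟩ : ∃ n', n = n' + 1 := ⟨n - 1, by omega⟩
    have hmt : m < t := hm
    set jm : Fin t := ⟨m, hmt⟩ with hjmdef
    have hjmval : (jm : ℕ) = m := rfl
    have hpos : 0 < 2 ^ m := Nat.pow_pos (by norm_num)
    -- C jm is nonempty and not dominated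
    have hCm : (C jm).Nonempty := by
      rw [← Finset.card_pos, hs.hC jm]; positivity
    obtain ⟨w, hw⟩ := hCm
    have hwD : w ∉ bigD t C (m+1) S' :=
      hs.clique_notin_bigD hsub jm (by omega) hw
    have hDne : bigD t C (m+1) S' ≠ Finset.univ := fun h => hwD (h.symm ▸ Finset.mem_univ w)
    -- the argmax set
    have hArg : (Finset.univ.filter fun v => ∀ u,
        newScore H (bigD t C (m+1) S') u ≤ newScore H (bigD t C (m+1) S') v).Nonempty := by
      obtain ⟨b, -, hb⟩ := Finset.exists_max_image Finset.univ
        (newScore H (bigD t C (m+1) S')) ⟨w, Finset.mem_univ w⟩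
      exact ⟨b, Finset.mem_filter.2 ⟨Finset.mem_univ b, fun u => hb u (Finset.mem_univ u)⟩⟩
    set x := (Finset.univ.filter fun v => ∀ u,
        newScore H (bigD t C (m+1) S') u ≤ newScore H (bigD t C (m+1) S') v).min' hArg
      with hxdef
    have hxmax : ∀ u, newScore H (bigD t C (m+1) S') u ≤ newScore H (bigD t C (m+1) S') x :=
      (Finset.mem_filter.1 (Finset.min'_mem _ hArg)).2
    have hstep : greedyAux H (n+1) (bigD t C (m+1) S')
        = x :: greedyAux H n (bigD t C (m+1) S' ∪ closedNbhd H x) := by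
      rw [greedyAux, if_neg hDne]
      simp only [dif_pos hArg]
      rfl
    -- lower bounds on max score
    have hstrict : t - (m+1) < 4 →
        4 * 2 ^ m + 1 ≤ newScore H (bigD t C (m+1) S') x := by
      intro hsmall
      have hne : S' ≠ S := by
        intro h; rw [h, hs.hS] at hcard; omega
      obtain ⟨u0, hu0S, hu0S'⟩ :=
        Finset.exists_of_ssubset (Finset.ssubset_iff_subset_ne.2 ⟨hsub, hne⟩)
      have hq : ((C jm).filter fun w => H.Adj u0 w).Nonempty := by
        rw [← Finset.card_pos, hs.hquarter u0 hu0S jm]; positivity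
      obtain ⟨v0, hv0⟩ := hq
      have hsc := hs.score_clique_lt (m := m+1) hsub jm (by rw [hjmval]; omega) (Finset.mem_filter.1 hv0).1
        hu0S (Finset.mem_filter.1 hv0).2
      rw [if_neg hu0S', hjmval] at hsc
      have := hxmax v0
      omega
    have hlow : 4 * 2 ^ m ≤ newScore H (bigD t C (m+1) S') x := by
      rcases lt_or_ge (t - (m+1)) 4 with hsmall | hbig
      · have := hstrict hsmall; omega
      · obtain ⟨uw, ⟨huw, hadjw⟩, -⟩ := hs.uniqueS jm hw
        have hsc := hs.score_clique_lt (m := m+1) hsub jm (by rw [hjmval]; omega) hw huw hadjw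
        rw [hjmval] at hsc
        have := hxmax w
        split at hsc <;> omega
    -- classification : x ∈ C jm
    have hxC : x ∈ C jm := by
      have hxcover : x ∈ S ∪ Finset.univ.biUnion C := hs.hcover ▸ Finset.mem_univ x
      rcases Finset.mem_union.1 hxcover with hxS | hxB
      · exfalso
        have h1 := hs.score_S (m := m+1) (S' := S') hxS
        have h2 : (2:ℕ) ^ (m+1) = 2 * 2 ^ m := by rw [pow_succ]; ring
        omega
      · rcases Finset.mem_biUnion.1 hxB with ⟨k, -, hxk⟩
        rcases lt_or_ge (k : ℕ) (m+1) with hk | hk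
        · rcases eq_or_ne (k : ℕ) m with hkm | hkm
          · have : k = jm := Fin.ext hkm
            exact this ▸ hxk
          · exfalso
            obtain ⟨u', ⟨hu', hadj'⟩, -⟩ := hs.uniqueS k hxk
            have hsc := hs.score_clique_lt hsub k hk hxk hu' hadj'
            have h2 : 2 ^ (k : ℕ) * 2 ≤ 2 ^ m :=
              calc 2 ^ (k : ℕ) * 2 = 2 ^ ((k : ℕ) + 1) := (pow_succ 2 _).symm
                _ ≤ 2 ^ m := Nat.pow_le_pow_right (by norm_num) (by omega)
            split at hsc <;> omega
        · exfalso
          have h1 := hs.score_clique_ge (S' := S') k hk hxk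
          omega
    -- the S-neighbor of x
    obtain ⟨u, ⟨huS, huadj⟩, -⟩ := hs.uniqueS jm hxC
    -- new dominated set
    have hD' : bigD t C (m+1) S' ∪ closedNbhd H x = bigD t C m (insert u S') := by
      rw [hs.nbhdClique jm hxC huS huadj]
      ext y
      simp only [Finset.mem_union, mem_bigD, Finset.mem_insert]
      constructor
      · rintro ((hy | ⟨j, hj, hyj⟩) | (rfl | hy))
        · exact Or.inl (Or.inr hy)
        · exact Or.inr ⟨j, by omega, hyj⟩
        · exact Or.inl (Or.inl rfl)
        · exact Or.inr ⟨jm, by omega, hy⟩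
      · rintro ((rfl | hy) | ⟨j, hj, hyj⟩)
        · exact Or.inr (Or.inl rfl)
        · exact Or.inl (Or.inl hy)
        · rcases eq_or_ne (j : ℕ) m with hjm | hjm
          · have : j = jm := Fin.ext hjm
            exact Or.inr (Or.inr (this ▸ hyj))
          · exact Or.inl (Or.inr ⟨j, by omega, hyj⟩)
    have hsub'' : insert u S' ⊆ S := Finset.insert_subset huS hsub
    have hcard'' : (insert u S').card = min (t - m) 4 := by
      rcases lt_or_ge (t - (m+1)) 4 with hsmall | hbig
      · have huS' : u ∉ S' := by
          intro huS'
          have hsc := hs.score_clique_lt (m := m+1) hsub jm (by rw [hjmval]; omega) hxC huS huadj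
          rw [if_pos huS', hjmval] at hsc
          have := hstrict hsmall
          omega
        rw [Finset.card_insert_of_notMem huS', hcard]
        omega
      · have hSS : S' = S := Finset.eq_of_subset_of_card_le hsub (by rw [hcard, hs.hS]; omega)
        have huS' : u ∈ S' := hSS ▸ huS
        rw [Finset.insert_eq_self.2 huS', hcard]
        omega
    obtain ⟨ihlen, ihcov⟩ := ih (by omega) n (by omega) (insert u S') hsub'' hcard''
    rw [hstep, hD']
    constructor
    · simp [ihlen]
    · intro j hj
      rcases eq_or_ne (j : ℕ) m with hjm | hjm
      · have : j = jm := Fin.ext hjm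
        exact ⟨x, List.mem_cons_self, this ▸ hxC⟩
      · obtain ⟨y, hy1, hy2⟩ := ihcov j (by omega)
        exact ⟨y, List.mem_cons_of_mem _ hy1, hy2⟩


/-- on the graph `H_t`, the greedy algorithm selects exactly `t`
vertices, one from each clique; hence `γ_g(H_t) = t`. -/
theorem Ht_greedy {V : Type*} [Fintype V] [LinearOrder V]
    (H : SimpleGraph V) [DecidableRel H.Adj]
    (t : ℕ) (ht : 4 ≤ t) (S : Finset V) (C : Fin t → Finset V)
    (hS : S.card = 4)
    (hC : ∀ j, (C j).card = 4 * 2 ^ (j : ℕ))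
    (hcover : S ∪ Finset.univ.biUnion C = Finset.univ)
    (hdSC : ∀ j, Disjoint S (C j))
    (hdCC : ∀ j k, j ≠ k → Disjoint (C j) (C k))
    (hclique : ∀ j, ∀ x ∈ C j, ∀ y ∈ C j, x ≠ y → H.Adj x y)
    (hCCedge : ∀ j k, j ≠ k → ∀ x ∈ C j, ∀ y ∈ C k, ¬ H.Adj x y)
    (hSindep : ∀ x ∈ S, ∀ y ∈ S, ¬ H.Adj x y)
    (hquarter : ∀ u ∈ S, ∀ j, ((C j).filter fun w => H.Adj u w).card = 2 ^ (j : ℕ))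
    (hdisjN : ∀ u ∈ S, ∀ v ∈ S, u ≠ v → ∀ w, ¬ (H.Adj u w ∧ H.Adj v w)) :
    (∀ j, ∃ x ∈ greedyList H, x ∈ C j) ∧ greedyNumber H = t := by
  classical
  have hs : Setup H t S C :=
    ⟨ht, hS, hC, hcover, hdSC, hdCC, hclique, hCCedge, hSindep, hquarter, hdisjN⟩
  have hfuel : t ≤ Fintype.card V := by
    have h1 : ((Finset.univ : Finset (Fin t)).biUnion C).card = ∑ j, (C j).card :=
      Finset.card_biUnion (fun j _ k _ hjk => hdCC j k hjk)
    have h3 : t ≤ ∑ j, (C j).card := by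
      calc t = ∑ _j : Fin t, 1 := by simp
        _ ≤ ∑ j, (C j).card := Finset.sum_le_sum fun j _ => by
            rw [hC j]
            have : 0 < 2 ^ (j : ℕ) := Nat.pow_pos (by norm_num)
            omega
    have h4 : ((Finset.univ : Finset (Fin t)).biUnion C).card ≤ Fintype.card V := by
      rw [← Finset.card_univ]
      exact Finset.card_le_card (Finset.subset_univ _)
    omega
  have hempty : (∅ : Finset V) = bigD t C t ∅ := by
    rw [bigD]
    have h : (Finset.univ.filter fun j : Fin t => t ≤ (j : ℕ)) = ∅ := by
      simp only [Finset.filter_eq_empty_iff]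
      intro j _
      have := j.isLt
      omega
    rw [h]
    simp
  have hgl : greedyList H = greedyAux H (Fintype.card V) (bigD t C t ∅) := by
    rw [← hempty]; rfl
  obtain ⟨hlen, hcov⟩ := hs.greedy_ind t le_rfl (Fintype.card V) hfuel ∅
    (Finset.empty_subset S) (by simp)
  constructor
  · intro j
    have := hcov j j.isLt
    rw [hgl]
    exact this
  · rw [greedyNumber, hgl]
    exact hlen


end SG
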